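/- Let M_1 and M_2 be matroids on the same ground set E with rank functions r_1 and r_2. The maximum size of a set independent in both M_1 and M_2 equals min over U ⊆ E of (r_1(U) + r_2(E \ U)). -/

import Mathlib

open Set Matroid

set_option linter.unusedSectionVars false

/-- A (directed) path given as a nonempty list of pairwise-distinct vertices
with consecutive pairs being edges of the digraph `G`. -/
def IsPathList {V : Type*} (G : V → V → Prop) (p : List V) : Prop :=
  p ≠ [] ∧ p.Nodup ∧ p.Chain' G

/-- The first vertex of the list `p` belongs to `A`. -/
def FirstIn {V : Type*} (p : List V) (A : Set V) : Prop := ∃ a ∈ A, p.head? = some a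

/-- The last vertex of the list `p` belongs to `A`. -/
def LastIn {V : Type*} (p : List V) (A : Set V) : Prop := ∃ a ∈ A, p.getLast? = some a

/-- `X` is an `(A,B)`-separator in `G`: every path of `G` starting in `A` and
ending in `B` meets `X`. -/
def IsSeparator {V : Type*} (G : V → V → Prop) (A B X : Set V) : Prop :=
  ∀ p : List V, IsPathList G p → FirstIn p A → LastIn p B → ∃ v ∈ p, v ∈ X

/-- Two lists of vertices share no vertex. -/
def ListsDisjoint {V : Type*} (p q : List V) : Prop := ∀ v, v ∈ p → v ∉ q

/-- The rank of `U` for an independence predicate: the maximum size of an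
independent subset of `U`. -/
noncomputable def rankOf {α : Type*} (Ind : Set α → Prop) (U : Set α) : ℕ :=
  sSup {n | ∃ I ⊆ U, Ind I ∧ I.ncard = n}



section Aux

variable {α : Type*} [Fintype α] {M : Matroid α} {I J X Y R : Set α} {e : α}

private lemma basis'_card_max (hI : M.IsBasis' I X) (hJ : M.Indep J) (hJX : J ⊆ X) :
    J.ncard ≤ I.ncard := by
  have hIb : (M ↾ X).IsBase I := isBase_restrict_iff'.mpr hI
  have hJi : (M ↾ X).Indep J := restrict_indep_iff.mpr ⟨hJ, hJX⟩
  obtain ⟨B, hB, hJB⟩ := Matroid.Indep.exists_isBase_superset hJi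
  calc J.ncard ≤ B.ncard := Set.ncard_le_ncard hJB B.toFinite
    _ = I.ncard := hB.ncard_eq_ncard_of_isBase hIb

private lemma rankOf_eq (hI : M.IsBasis' I X) : rankOf M.Indep X = I.ncard := by
  have hmem : I.ncard ∈ {n | ∃ J ⊆ X, M.Indep J ∧ J.ncard = n} := ⟨I, hI.subset, hI.indep, rfl⟩
  refine le_antisymm (csSup_le ⟨_, hmem⟩ ?_) (le_csSup ⟨I.ncard, ?_⟩ hmem)
  · rintro n ⟨J, hJX, hJ, rfl⟩; exact basis'_card_max hI hJ hJX
  · rintro n ⟨J, hJX, hJ, rfl⟩; exact basis'_card_max hI hJ hJX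

private lemma indep_le_rankOf (hJ : M.Indep J) (hJX : J ⊆ X) : J.ncard ≤ rankOf M.Indep X := by
  obtain ⟨I, hI⟩ := M.exists_isBasis' X
  rw [rankOf_eq hI]; exact basis'_card_max hI hJ hJX

private lemma rankOf_empty (M : Matroid α) : rankOf M.Indep ∅ = 0 := by
  rw [rankOf_eq (M.empty_indep.isBasis_self.isBasis'), Set.ncard_empty]

private lemma rankOf_insert_le : rankOf M.Indep (insert e X) ≤ rankOf M.Indep X + 1 := by
  obtain ⟨I, hI⟩ := M.exists_isBasis' (insert e X)
  rw [rankOf_eq hI]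
  have h1 : I \ {e} ⊆ X := fun x hx =>
    ((mem_insert_iff.mp (hI.subset hx.1)).resolve_left hx.2)
  have h2 : (I \ {e}).ncard ≤ rankOf M.Indep X := indep_le_rankOf (hI.indep.diff _) h1
  have h3 : I.ncard ≤ (I \ {e}).ncard + 1 := by
    calc I.ncard ≤ (insert e (I \ {e})).ncard := Set.ncard_le_ncard
          (fun x hx => by by_cases h : x = e <;> simp [h, hx]) (toFinite _)
      _ ≤ (I \ {e}).ncard + 1 := Set.ncard_insert_le _ _
  omega

private lemma rankOf_insert_loop (he : ¬ M.Indep {e}) :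
    rankOf M.Indep (insert e X) = rankOf M.Indep X := by
  unfold rankOf; congr 1; ext n
  constructor
  · rintro ⟨J, hJX, hJ, rfl⟩
    have heJ : e ∉ J := fun h => he (hJ.subset (singleton_subset_iff.mpr h))
    exact ⟨J, fun x hx => (mem_insert_iff.mp (hJX hx)).resolve_left
      (fun h => heJ (h ▸ hx)), hJ, rfl⟩
  · rintro ⟨J, hJX, hJ, rfl⟩
    exact ⟨J, hJX.trans (subset_insert _ _), hJ, rfl⟩

private lemma rankOf_submod (M : Matroid α) (X Y : Set α) :
    rankOf M.Indep (X ∪ Y) + rankOf M.Indep (X ∩ Y) ≤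
      rankOf M.Indep X + rankOf M.Indep Y := by
  obtain ⟨I, hI⟩ := M.exists_isBasis' (X ∩ Y)
  obtain ⟨J, hJ, hIJ⟩ := hI.indep.subset_isBasis'_of_subset
    (hI.subset.trans (inter_subset_left.trans subset_union_left))
  rw [rankOf_eq hI, rankOf_eq hJ]
  have h1 : (J ∩ X).ncard ≤ rankOf M.Indep X :=
    indep_le_rankOf (hJ.indep.inter_right X) inter_subset_right
  have h2 : (J ∩ Y).ncard ≤ rankOf M.Indep Y :=
    indep_le_rankOf (hJ.indep.inter_right Y) inter_subset_right
  have hu : (J ∩ X) ∪ (J ∩ Y) = J := by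
    rw [← inter_union_distrib_left]; exact inter_eq_self_of_subset_left hJ.subset
  have hcard := Set.ncard_union_add_ncard_inter (J ∩ X) (J ∩ Y) (toFinite _) (toFinite _)
  rw [hu, ← inter_inter_distrib_left] at hcard
  have hIsub : I ⊆ J ∩ (X ∩ Y) := subset_inter hIJ hI.subset
  have hIle : I.ncard ≤ (J ∩ (X ∩ Y)).ncard := Set.ncard_le_ncard hIsub (toFinite _)
  omega

end Aux
section Aux2

variable {α : Type*} [Fintype α] {M : Matroid α} {I J X Y R : Set α} {e : α}

private lemma indep_aug_ncard (hI : M.Indep I) (hJ : M.Indep J) (h : I.ncard < J.ncard) :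
    ∃ x ∈ J, x ∉ I ∧ M.Indep (insert x I) := by
  obtain ⟨I', hI', hII'⟩ := hI.subset_isBasis'_of_subset (subset_union_left (t := J))
  have hJI' : J.ncard ≤ I'.ncard := basis'_card_max hI' hJ subset_union_right
  have hns : ¬ I' ⊆ I := fun hss => by
    have := Set.ncard_le_ncard hss (toFinite _); omega
  obtain ⟨x, hxI', hxI⟩ := not_subset.mp hns
  have hxJ : x ∈ J := (hI'.subset hxI').resolve_left hxI
  exact ⟨x, hxJ, hxI, hI'.indep.subset (insert_subset hxI' hII')⟩

/-- The contraction of a single non-loop element `e`. -/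
private noncomputable def conE (M : Matroid α) (e : α) (he : M.Indep {e}) : Matroid α :=
  (IndepMatroid.ofFinite (E := M.E \ {e}) (Set.toFinite _)
    (Indep := fun I => I ⊆ M.E \ {e} ∧ M.Indep (insert e I))
    (⟨empty_subset _, by simpa using he⟩)
    (fun I J hJ hIJ => ⟨hIJ.trans hJ.1, hJ.2.subset (insert_subset_insert hIJ)⟩)
    (by
      rintro I J ⟨hIg, hIi⟩ ⟨hJg, hJi⟩ hlt
      have heI : e ∉ I := fun h => (hIg h).2 rfl
      have heJ : e ∉ J := fun h => (hJg h).2 rfl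
      have hlt' : (insert e I).ncard < (insert e J).ncard := by
        rw [Set.ncard_insert_of_notMem heI (toFinite _),
          Set.ncard_insert_of_notMem heJ (toFinite _)]; omega
      obtain ⟨x, hxJ, hxI, hind⟩ := indep_aug_ncard hIi hJi hlt'
      have hxe : x ≠ e := fun h => hxI (h ▸ mem_insert _ _)
      have hxJ' : x ∈ J := (mem_insert_iff.mp hxJ).resolve_left hxe
      refine ⟨x, hxJ', fun h => hxI (mem_insert_of_mem _ h), ?_, ?_⟩
      · exact insert_subset (hJg hxJ') (fun y hy => hIg hy)
      · rwa [Set.insert_comm] at hind)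
    (fun I hI => hI.1)).matroid

private lemma conE_indep (he : M.Indep {e}) :
    (conE M e he).Indep I ↔ I ⊆ M.E \ {e} ∧ M.Indep (insert e I) := by
  simp [conE]

private lemma conE_ground (he : M.Indep {e}) : (conE M e he).E = M.E \ {e} := rfl

private lemma rankOf_conE (he : M.Indep {e}) (hX : X ⊆ M.E \ {e}) :
    rankOf (conE M e he).Indep X + 1 = rankOf M.Indep (insert e X) := by
  obtain ⟨I, hI⟩ := (conE M e he).exists_isBasis' X
  have hIX : I ⊆ X := hI.subset
  obtain ⟨hIg, hIi⟩ := (conE_indep he).mp hI.indep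
  have heI : e ∉ I := fun h => (hIg h).2 rfl
  have hB : M.IsBasis (insert e I) (insert e X) := by
    refine hIi.isBasis_of_forall_insert (insert_subset_insert hIX) ?_
    rintro x ⟨hx, hxnot⟩
    have hxe : x ≠ e := fun h => hxnot (h ▸ mem_insert _ _)
    have hxX : x ∈ X := (mem_insert_iff.mp hx).resolve_left hxe
    have hxI : x ∉ I := fun h => hxnot (mem_insert_of_mem _ h)
    refine Matroid.dep_of_not_indep ?_ ?_
    · intro hind
      rw [Set.insert_comm] at hind
      exact hI.insert_not_indep ⟨hxX, hxI⟩
        ((conE_indep he).mpr ⟨insert_subset (hX hxX) hIg, hind⟩)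
    · exact insert_subset ((hX hxX).1)
        (insert_subset (he.subset_ground rfl) (fun y hy => (hIg hy).1))
  rw [rankOf_eq hI, rankOf_eq hB.isBasis', Set.ncard_insert_of_notMem heI (toFinite _)]

private lemma rankOf_restrict (hXR : X ⊆ R) :
    rankOf (M ↾ R).Indep X = rankOf M.Indep X := by
  unfold rankOf; congr 1; ext n
  constructor
  · rintro ⟨J, hJX, hJ, rfl⟩
    exact ⟨J, hJX, (Matroid.restrict_indep_iff.mp hJ).1, rfl⟩
  · rintro ⟨J, hJX, hJ, rfl⟩
    exact ⟨J, hJX, Matroid.restrict_indep_iff.mpr ⟨hJ, hJX.trans hXR⟩, rfl⟩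

/-- The max size of a common independent set. -/
private noncomputable def maxC (M₁ M₂ : Matroid α) : ℕ :=
  sSup {n : ℕ | ∃ I : Set α, M₁.Indep I ∧ M₂.Indep I ∧ I.ncard = n}

private lemma maxC_bddAbove (M₁ M₂ : Matroid α) :
    BddAbove {n : ℕ | ∃ I : Set α, M₁.Indep I ∧ M₂.Indep I ∧ I.ncard = n} := by
  rw [bddAbove_def]; refine ⟨(Set.univ : Set α).ncard, ?_⟩
  rintro n ⟨I, _, _, rfl⟩
  exact Set.ncard_le_ncard (subset_univ I) (toFinite _)

private lemma le_maxC (h₁ : M.Indep I) {M₂ : Matroid α} (h₂ : M₂.Indep I) :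
    I.ncard ≤ maxC M M₂ :=
  le_csSup (maxC_bddAbove M M₂) ⟨I, h₁, h₂, rfl⟩

private lemma maxC_mem (M₁ M₂ : Matroid α) :
    ∃ I : Set α, M₁.Indep I ∧ M₂.Indep I ∧ I.ncard = maxC M₁ M₂ :=
  Nat.sSup_mem (s := {n : ℕ | ∃ I : Set α, M₁.Indep I ∧ M₂.Indep I ∧ I.ncard = n})
    ⟨0, ∅, M₁.empty_indep, M₂.empty_indep, Set.ncard_empty _⟩ (maxC_bddAbove M₁ M₂)

end Aux2
section Key

variable {α : Type*} [Fintype α]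

private lemma maxC_restrict_le (M₁ M₂ : Matroid α) (R : Set α) :
    maxC (M₁ ↾ R) (M₂ ↾ R) ≤ maxC M₁ M₂ := by
  refine csSup_le ⟨0, ∅, (M₁ ↾ R).empty_indep, (M₂ ↾ R).empty_indep, Set.ncard_empty _⟩ ?_
  rintro n ⟨I, hI₁, hI₂, rfl⟩
  exact le_maxC (Matroid.restrict_indep_iff.mp hI₁).1 (Matroid.restrict_indep_iff.mp hI₂).1

private lemma key (n : ℕ) : ∀ (M₁ M₂ : Matroid α), M₁.E = M₂.E → (M₁.E).ncard ≤ n →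
    ∃ U ⊆ M₁.E, rankOf M₁.Indep U + rankOf M₂.Indep (M₁.E \ U) ≤ maxC M₁ M₂ := by
  induction n with
  | zero =>
    intro M₁ M₂ hE hc
    have hemp : M₁.E = ∅ := (Set.ncard_eq_zero (toFinite _)).mp (Nat.le_zero.mp hc)
    refine ⟨∅, empty_subset _, ?_⟩
    rw [hemp, Set.diff_empty, rankOf_empty, rankOf_empty]
    exact Nat.zero_le _
  | succ n ih =>
    intro M₁ M₂ hE hc
    by_cases hemp : M₁.E = ∅
    · refine ⟨∅, empty_subset _, ?_⟩
      rw [hemp, Set.diff_empty, rankOf_empty, rankOf_empty]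
      exact Nat.zero_le _
    obtain ⟨e, he⟩ := Set.nonempty_iff_ne_empty.mpr hemp
    have hE2 : M₂.E = M₁.E := hE.symm
    -- the deletion step
    have hdg : (M₁ ↾ (M₁.E \ {e})).E = (M₂ ↾ (M₁.E \ {e})).E := rfl
    have hdc : ((M₁ ↾ (M₁.E \ {e})).E).ncard ≤ n := by
      show (M₁.E \ {e}).ncard ≤ n
      have h1 : (M₁.E \ {e}).ncard < (M₁.E).ncard :=
        Set.ncard_diff_singleton_lt_of_mem he (toFinite _)
      omega
    obtain ⟨U₁, hU₁E, hU₁⟩ := ih (M₁ ↾ (M₁.E \ {e})) (M₂ ↾ (M₁.E \ {e})) hdg hdc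
    rw [Matroid.restrict_ground_eq] at hU₁E hU₁
    rw [rankOf_restrict hU₁E, rankOf_restrict (M := M₂) (R := M₁.E \ {e}) (X := (M₁.E \ {e}) \ U₁) diff_subset] at hU₁
    have hdelk := maxC_restrict_le M₁ M₂ (M₁.E \ {e})
    have heU₁ : e ∉ U₁ := fun h => (hU₁E h).2 rfl
    by_cases hl1 : M₁.Indep {e}
    swap
    · -- e is a loop of M₁
      refine ⟨insert e U₁, insert_subset he (hU₁E.trans diff_subset), ?_⟩
      have hseteq : M₁.E \ insert e U₁ = (M₁.E \ {e}) \ U₁ := by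
        ext x; simp only [mem_diff, mem_insert_iff, mem_singleton_iff, not_or]; tauto
      rw [rankOf_insert_loop hl1, hseteq]
      exact hU₁.trans hdelk
    by_cases hl2 : M₂.Indep {e}
    swap
    · -- e is a loop of M₂
      refine ⟨U₁, hU₁E.trans diff_subset, ?_⟩
      have hseteq : M₁.E \ U₁ = insert e ((M₁.E \ {e}) \ U₁) := by
        ext x
        simp only [mem_diff, mem_insert_iff, mem_singleton_iff]
        constructor
        · rintro ⟨hxE, hxU⟩
          by_cases hxe : x = e
          · exact Or.inl hxe
          · exact Or.inr ⟨⟨hxE, hxe⟩, hxU⟩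
        · rintro (rfl | ⟨⟨hxE, _⟩, hxU⟩)
          · exact ⟨he, heU₁⟩
          · exact ⟨hxE, hxU⟩
      rw [hseteq, rankOf_insert_loop hl2]
      exact hU₁.trans hdelk
    -- e is a non-loop of both matroids
    by_cases hkk : maxC (M₁ ↾ (M₁.E \ {e})) (M₂ ↾ (M₁.E \ {e})) < maxC M₁ M₂
    · -- the deletion bound is strict; use U₁ directly
      refine ⟨U₁, hU₁E.trans diff_subset, ?_⟩
      have hseteq : M₁.E \ U₁ = insert e ((M₁.E \ {e}) \ U₁) := by
        ext x
        simp only [mem_diff, mem_insert_iff, mem_singleton_iff]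
        constructor
        · rintro ⟨hxE, hxU⟩
          by_cases hxe : x = e
          · exact Or.inl hxe
          · exact Or.inr ⟨⟨hxE, hxe⟩, hxU⟩
        · rintro (rfl | ⟨⟨hxE, _⟩, hxU⟩)
          · exact ⟨he, heU₁⟩
          · exact ⟨hxE, hxU⟩
      have hle := rankOf_insert_le (M := M₂) (e := e) (X := (M₁.E \ {e}) \ U₁)
      rw [hseteq]
      omega
    · -- the contraction step
      have hdel' : rankOf M₁.Indep U₁ + rankOf M₂.Indep ((M₁.E \ {e}) \ U₁) ≤ maxC M₁ M₂ :=
        hU₁.trans hdelk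
      have hcg : (conE M₁ e hl1).E = (conE M₂ e hl2).E := by
        rw [conE_ground, conE_ground, hE]
      have hcc : ((conE M₁ e hl1).E).ncard ≤ n := by
        rw [conE_ground]
        have h1 : (M₁.E \ {e}).ncard < (M₁.E).ncard :=
          Set.ncard_diff_singleton_lt_of_mem he (toFinite _)
        omega
      obtain ⟨U₂, hU₂E, hU₂⟩ := ih (conE M₁ e hl1) (conE M₂ e hl2) hcg hcc
      rw [conE_ground] at hU₂E hU₂
      have heU₂ : e ∉ U₂ := fun h => (hU₂E h).2 rfl
      -- the contraction max is at most k - 1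
      obtain ⟨I, hI₁, hI₂, hIcard⟩ := maxC_mem (conE M₁ e hl1) (conE M₂ e hl2)
      obtain ⟨hIg, hIi₁⟩ := (conE_indep hl1).mp hI₁
      obtain ⟨-, hIi₂⟩ := (conE_indep hl2).mp hI₂
      have heI : e ∉ I := fun h => (hIg h).2 rfl
      have hck : maxC (conE M₁ e hl1) (conE M₂ e hl2) + 1 ≤ maxC M₁ M₂ := by
        have h := le_maxC hIi₁ hIi₂
        rwa [Set.ncard_insert_of_notMem heI (toFinite _), hIcard] at h
      -- translate the contraction ranks
      have h1 := rankOf_conE hl1 hU₂E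
      have h2 := rankOf_conE hl2 (X := (M₁.E \ {e}) \ U₂)
        (by rw [hE2]; exact diff_subset)
      have hcon : rankOf M₁.Indep (insert e U₂) +
          rankOf M₂.Indep (insert e ((M₁.E \ {e}) \ U₂)) ≤ maxC M₁ M₂ + 1 := by omega
      -- submodularity
      have s1 := rankOf_submod M₁ U₁ (insert e U₂)
      have s2 := rankOf_submod M₂ ((M₁.E \ {e}) \ U₁) (insert e ((M₁.E \ {e}) \ U₂))
      have ha : U₁ ∩ insert e U₂ = U₁ ∩ U₂ := by
        ext x
        simp only [mem_inter_iff, mem_insert_iff]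
        constructor
        · rintro ⟨hx1, rfl | hx2⟩
          · exact absurd hx1 heU₁
          · exact ⟨hx1, hx2⟩
        · rintro ⟨hx1, hx2⟩
          exact ⟨hx1, Or.inr hx2⟩
      have hb : U₁ ∪ insert e U₂ = insert e (U₁ ∪ U₂) := by
        ext x; simp only [mem_union, mem_insert_iff]; tauto
      have hcset : ((M₁.E \ {e}) \ U₁) ∩ insert e ((M₁.E \ {e}) \ U₂) =
          M₁.E \ insert e (U₁ ∪ U₂) := by
        ext x
        by_cases hxe : x = e
        · subst hxe; simp
        · simp only [mem_inter_iff, mem_diff, mem_insert_iff, mem_singleton_iff, mem_union,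
            hxe, false_or, not_or]
          tauto
      have hdset : ((M₁.E \ {e}) \ U₁) ∪ insert e ((M₁.E \ {e}) \ U₂) =
          M₁.E \ (U₁ ∩ U₂) := by
        ext x
        by_cases hxe : x = e
        · subst hxe; simp [he, heU₁]
        · simp only [mem_union, mem_diff, mem_insert_iff, mem_singleton_iff, mem_inter_iff,
            hxe, false_or, not_and]
          tauto
      rw [ha, hb] at s1
      rw [hcset, hdset] at s2
      by_cases hfin : rankOf M₁.Indep (U₁ ∩ U₂) + rankOf M₂.Indep (M₁.E \ (U₁ ∩ U₂)) ≤
          maxC M₁ M₂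
      · exact ⟨U₁ ∩ U₂, inter_subset_left.trans (hU₁E.trans diff_subset), hfin⟩
      · refine ⟨insert e (U₁ ∪ U₂),
          insert_subset he (union_subset (hU₁E.trans diff_subset) (hU₂E.trans diff_subset)), ?_⟩
        omega

end Key

/-- Matroid intersection theorem (Edmonds): for matroids `M₁, M₂` on a common
ground set `E`, the maximum size of a common independent set equals
`min over U ⊆ E of (r₁(U) + r₂(E \ U))`. -/
theorem matroid_intersection {α : Type*} [Fintype α] (E : Set α)
    (M₁ M₂ : Matroid α) (h₁ : M₁.E = E) (h₂ : M₂.E = E) :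
    sSup {n : ℕ | ∃ I : Set α, M₁.Indep I ∧ M₂.Indep I ∧ I.ncard = n} =
    sInf {n : ℕ | ∃ U ⊆ E, n = rankOf M₁.Indep U + rankOf M₂.Indep (E \ U)} := by
  subst h₁
  have hE : M₁.E = M₂.E := h₂.symm
  obtain ⟨U₀, hU₀E, hU₀⟩ := key (M₁.E).ncard M₁ M₂ hE le_rfl
  refine le_antisymm ?_ ?_
  · have hne : {n : ℕ | ∃ U ⊆ M₁.E, n = rankOf M₁.Indep U + rankOf M₂.Indep (M₁.E \ U)}.Nonempty :=
      ⟨_, ∅, empty_subset _, rfl⟩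
    refine le_csInf hne ?_
    rintro b ⟨U, hU, rfl⟩
    refine csSup_le ⟨0, ∅, M₁.empty_indep, M₂.empty_indep, Set.ncard_empty _⟩ ?_
    rintro m ⟨I, hI₁, hI₂, rfl⟩
    have h1 : (I ∩ U).ncard ≤ rankOf M₁.Indep U :=
      indep_le_rankOf (hI₁.inter_right U) inter_subset_right
    have h2 : (I \ U).ncard ≤ rankOf M₂.Indep (M₁.E \ U) :=
      indep_le_rankOf (hI₂.diff U)
        (diff_subset_diff_left (hI₂.subset_ground.trans hE.symm.subset))
    have h3 := Set.ncard_inter_add_ncard_diff_eq_ncard I U (toFinite _)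
    omega
  · have hmem : rankOf M₁.Indep U₀ + rankOf M₂.Indep (M₁.E \ U₀) ∈
        {n : ℕ | ∃ U ⊆ M₁.E, n = rankOf M₁.Indep U + rankOf M₂.Indep (M₁.E \ U)} :=
      ⟨U₀, hU₀E, rfl⟩
    exact (Nat.sInf_le hmem).trans hU₀
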